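/- Let f : X → X be a pointwise periodic homeomorphism of a compact metric space X. If (X, f) is not equicontinuous, then there exists a nonempty closed set A ∈ 2^X that is recurrent for 2^f but not almost periodic for 2^f; i.e. R(2^f) \ AP(2^f) ≠ ∅. -/
import Mathlib


open TopologicalSpace Metric Set Filter

/-- The induced map on the hyperspace of nonempty compact (= closed) subsets. -/
noncomputable def hyper {X : Type*} [MetricSpace X] (f : X ≃ₜ X) :
    NonemptyCompacts X → NonemptyCompacts X :=
  fun A => ⟨⟨f '' A, A.isCompact.image f.continuous⟩, A.nonempty.image f⟩

/-- `x` is uniformly recurrent for `g`. -/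
def IsUnifRec {α : Type*} [MetricSpace α] (g : α → α) (x : α) : Prop :=
  ∀ ε > (0:ℝ), ∃ N > 0, ∀ k : ℕ, dist (g^[k * N] x) x < ε

/-- `x` is recurrent for `g` (it belongs to its own ω-limit set). -/
def IsRec {α : Type*} [MetricSpace α] (g : α → α) (x : α) : Prop :=
  ∀ ε > (0:ℝ), ∀ m : ℕ, ∃ n ≥ m, 0 < n ∧ dist (g^[n] x) x < ε

/-- `x` is almost periodic for `g`. -/
def IsAP {α : Type*} [MetricSpace α] (g : α → α) (x : α) : Prop :=
  ∀ ε > (0:ℝ), ∃ N : ℕ, ∀ n : ℕ, ∃ i < N, dist (g^[n + i] x) x < ε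

/-- `(x, y)` is an asymptotic pair for `g`. -/
def Asymp {α : Type*} [MetricSpace α] (g : α → α) (x y : α) : Prop :=
  Filter.Tendsto (fun n => dist (g^[n] x) (g^[n] y)) Filter.atTop (nhds 0)

/-- `(x, y)` is a proximal pair for `g`. -/
def Proximal {α : Type*} [MetricSpace α] (g : α → α) (x y : α) : Prop :=
  ∀ ε > (0:ℝ), ∀ m : ℕ, ∃ n ≥ m, dist (g^[n] x) (g^[n] y) < ε

/-- The ω-limit set of `x` under `g`. -/
def omegaSet {α : Type*} [MetricSpace α] (g : α → α) (x : α) : Set α :=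
  {y | ∀ ε > (0:ℝ), ∀ m : ℕ, ∃ n ≥ m, dist (g^[n] x) y < ε}

/-- `M` is a minimal set of `g`. -/
def IsMinimalFor {α : Type*} [TopologicalSpace α] (g : α → α) (M : Set α) : Prop :=
  M.Nonempty ∧ IsClosed M ∧ Set.MapsTo g M M ∧
    ∀ M' ⊆ M, M'.Nonempty → IsClosed M' → Set.MapsTo g M' M' → M' = M

/-- `A` is internally chain transitive for `g`. -/
def ICT {α : Type*} [MetricSpace α] (g : α → α) (A : Set α) : Prop :=
  ∀ a ∈ A, ∀ b ∈ A, ∀ ε > (0:ℝ), ∃ N : ℕ, 1 ≤ N ∧ ∃ c : ℕ → α,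
    c 0 = a ∧ c N = b ∧ (∀ i ≤ N, c i ∈ A) ∧ ∀ i < N, dist (g (c i)) (c (i + 1)) < ε

set_option linter.unusedSectionVars false

section Aux

variable {X : Type*} [MetricSpace X] [CompactSpace X]

private lemma fix_dvd (g : X → X) {u : X} {a b : ℕ} (hu : g^[a] u = u) (h : a ∣ b) :
    g^[b] u = u := by
  obtain ⟨t, rfl⟩ := h
  rw [Function.iterate_mul]
  exact Function.IsFixedPt.iterate hu t

private lemma hyper_iter (f : X ≃ₜ X) (n : ℕ) (A : NonemptyCompacts X) :
    (((hyper f)^[n] A : Set X)) = (⇑f)^[n] '' (A : Set X) := by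
  induction n with
  | zero => simp
  | succ n ih =>
    have hc : ∀ B : NonemptyCompacts X, ((hyper f B : Set X)) = ⇑f '' (B : Set X) := fun _ => rfl
    rw [Function.iterate_succ_apply', hc, ih, Function.iterate_succ', Set.image_comp]

private lemma shadow (f : X ≃ₜ X) (x : X) : ∀ (T : ℕ) {ε : ℝ}, 0 < ε →
    ∃ α > (0:ℝ), ∀ u : X, dist u x < α → ∀ j ≤ T, dist ((⇑f)^[j] u) ((⇑f)^[j] x) < ε := by
  intro T
  induction T with
  | zero =>
    intro ε hε
    refine ⟨ε, hε, fun u hu j hj => ?_⟩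
    have : j = 0 := Nat.le_zero.mp hj
    simpa [this] using hu
  | succ T ih =>
    intro ε hε
    obtain ⟨α, hα, hsh⟩ := ih hε
    obtain ⟨β, hβ, hb⟩ := Metric.continuous_iff.mp ((f.continuous).iterate (T+1)) x ε hε
    refine ⟨min α β, lt_min hα hβ, fun u hu j hj => ?_⟩
    by_cases h : j ≤ T
    · exact hsh u (lt_of_lt_of_le hu (min_le_left _ _)) j h
    · have : j = T + 1 := by omega
      subst this
      exact hb u (lt_of_lt_of_le hu (min_le_right _ _))

private lemma exists_master (f : X ≃ₜ X) (hper : ∀ x : X, ∃ n > 0, (⇑f)^[n] x = x)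
    (hne : ¬ (∀ ε > (0:ℝ), ∃ δ > (0:ℝ), ∀ x y : X, dist x y < δ →
      ∀ n : ℕ, dist ((⇑f)^[n] x) ((⇑f)^[n] y) < ε)) :
    ∃ (x w : X) (z : ℕ → X) (v : ℕ → ℕ) (c : ℝ), 0 < c ∧
      Tendsto z atTop (nhds x) ∧
      Tendsto (fun k => (⇑f)^[v k] (z k)) atTop (nhds w) ∧
      ∀ i : ℕ, 3 * c ≤ dist ((⇑f)^[i] w) x := by
  classical
  push_neg at hne
  obtain ⟨ε₀, hε₀, hwit⟩ := hne
  have H : ∀ k : ℕ, ∃ ab : X × X, dist ab.1 ab.2 < 1/(k+1) ∧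
      ∃ n : ℕ, ε₀ ≤ dist ((⇑f)^[n] ab.1) ((⇑f)^[n] ab.2) := by
    intro k
    obtain ⟨a, b, hab, n, hn⟩ := hwit (1/(k+1)) (by positivity)
    exact ⟨(a, b), hab, n, hn⟩
  choose ab hab n0 hsep using H
  obtain ⟨x, φ, hφ, hax⟩ := CompactSpace.tendsto_subseq (fun k => (ab k).1)
  have hdax : Tendsto (fun k => dist ((ab (φ k)).1) x) atTop (nhds 0) :=
    tendsto_iff_dist_tendsto_zero.mp hax
  have hdba : Tendsto (fun k => dist ((ab (φ k)).2) ((ab (φ k)).1)) atTop (nhds 0) := by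
    apply squeeze_zero (fun _ => dist_nonneg) (g := fun k => 1/((φ k : ℝ)+1))
      (fun k => by rw [dist_comm]; exact le_of_lt (hab (φ k)))
    exact tendsto_one_div_add_atTop_nhds_zero_nat.comp hφ.tendsto_atTop
  have hbx : Tendsto (fun k => dist ((ab (φ k)).2) x) atTop (nhds 0) := by
    have hsum := hdba.add hdax
    rw [add_zero] at hsum
    exact squeeze_zero (fun _ => dist_nonneg)
      (fun k => dist_triangle ((ab (φ k)).2) ((ab (φ k)).1) x) hsum
  have H2 : ∀ k : ℕ, ∃ u : X,
      (dist u x ≤ dist ((ab (φ k)).1) x + dist ((ab (φ k)).2) x) ∧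
      ∃ n : ℕ, ε₀/2 ≤ dist ((⇑f)^[n] u) ((⇑f)^[n] x) := by
    intro k
    have h := hsep (φ k)
    have htri := dist_triangle ((⇑f)^[n0 (φ k)] ((ab (φ k)).1)) ((⇑f)^[n0 (φ k)] x)
      ((⇑f)^[n0 (φ k)] ((ab (φ k)).2))
    by_cases hcc : ε₀/2 ≤ dist ((⇑f)^[n0 (φ k)] ((ab (φ k)).1)) ((⇑f)^[n0 (φ k)] x)
    · exact ⟨(ab (φ k)).1, le_add_of_le_of_nonneg le_rfl dist_nonneg, n0 (φ k), hcc⟩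
    · refine ⟨(ab (φ k)).2, le_add_of_nonneg_left dist_nonneg, n0 (φ k), ?_⟩
      push_neg at hcc
      rw [dist_comm]
      linarith
  choose z hzb m hm using H2
  have hzx : Tendsto z atTop (nhds x) := by
    rw [tendsto_iff_dist_tendsto_zero]
    have hsum := (hdax.add hbx)
    rw [add_zero] at hsum
    have hax' : Tendsto (fun k => dist ((ab (φ k)).1) x) atTop (nhds 0) := hdax
    exact squeeze_zero (fun _ => dist_nonneg) hzb hsum
  -- the finite orbit of x
  obtain ⟨p, hp, hpx⟩ := hper x
  have hpx' : Function.IsPeriodicPt (⇑f) p x := hpx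
  set O : Finset X := (Finset.range p).image (fun i => (⇑f)^[i] x) with hOdef
  have hO : ∀ nn : ℕ, (⇑f)^[nn] x ∈ O := by
    intro nn
    have h1 : (⇑f)^[nn % p] x = (⇑f)^[nn] x := hpx'.iterate_mod_apply nn
    rw [← h1]
    exact Finset.mem_image.mpr ⟨nn % p, Finset.mem_range.mpr (Nat.mod_lt _ hp), rfl⟩
  -- minimal separation scale
  set Dset : Finset ℝ := insert (ε₀/2) (((O ×ˢ O).filter (fun q : X × X => q.1 ≠ q.2)).image
      (fun q : X × X => dist q.1 q.2)) with hDdef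
  have hDne : Dset.Nonempty := ⟨ε₀/2, Finset.mem_insert_self _ _⟩
  set D : ℝ := Dset.min' hDne with hDdef2
  have hDpos : 0 < D := by
    rw [hDdef2]
    apply (Finset.lt_min'_iff _ hDne).mpr
    intro r hr
    rcases Finset.mem_insert.mp hr with h | h
    · rw [h]; linarith
    · obtain ⟨qq, hq, rfl⟩ := Finset.mem_image.mp h
      exact dist_pos.mpr (Finset.mem_filter.mp hq).2
  have hDε : D ≤ ε₀/2 := Finset.min'_le _ _ (Finset.mem_insert_self _ _)
  have hDle : ∀ o₁ ∈ O, ∀ o₂ ∈ O, o₁ ≠ o₂ → D ≤ dist o₁ o₂ := by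
    intro o₁ h₁ o₂ h₂ hne'
    exact Finset.min'_le _ _ (Finset.mem_insert_of_mem (Finset.mem_image.mpr
      ⟨(o₁, o₂), Finset.mem_filter.mpr ⟨Finset.mem_product.mpr ⟨h₁, h₂⟩, hne'⟩, rfl⟩))
  -- modulus of continuity
  have huc := CompactSpace.uniformContinuous_of_continuous f.continuous
  obtain ⟨δ₁, hδ₁, hδ⟩ := Metric.uniformContinuous_iff.mp huc (D/4) (by positivity)
  set α : ℝ := min δ₁ (D/4) with hαdef
  have hαpos : 0 < α := lt_min hδ₁ (by positivity)
  have hα4 : α ≤ D/4 := min_le_right _ _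
  have hstep1 : ∀ u v' : X, dist u v' < α → dist (f u) (f v') < D/4 :=
    fun u v' h => hδ (lt_of_lt_of_le h (min_le_left _ _))
  -- escape from the orbit neighborhood
  have hesc : ∀ k : ℕ, ∃ j : ℕ, dist (z k) x < α → ∀ o ∈ O, α ≤ dist ((⇑f)^[j] (z k)) o := by
    intro k
    by_cases hzk : dist (z k) x < α
    swap
    · exact ⟨0, fun h => absurd h hzk⟩
    by_contra hcon
    push_neg at hcon
    have key : ∀ j : ℕ, dist ((⇑f)^[j] (z k)) ((⇑f)^[j] x) < α := by
      intro j
      induction j with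
      | zero => simpa using hzk
      | succ j ih =>
        have h1 : dist ((⇑f)^[j+1] (z k)) ((⇑f)^[j+1] x) < D/4 := by
          rw [Function.iterate_succ_apply', Function.iterate_succ_apply']
          exact hstep1 _ _ ih
        obtain ⟨o, ho, h2⟩ := (hcon (j+1)).2
        have h3 : dist o ((⇑f)^[j+1] x) < D/2 := by
          have h4 := dist_triangle o ((⇑f)^[j+1] (z k)) ((⇑f)^[j+1] x)
          rw [dist_comm o ((⇑f)^[j+1] (z k))] at h4
          linarith
        have ho2 : o = (⇑f)^[j+1] x := by
          by_contra hne'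
          have := hDle o ho _ (hO (j+1)) hne'
          linarith
        rw [← ho2]
        exact h2
    have h5 := hm k
    have h6 := key (m k)
    linarith
  choose j hj using hesc
  -- limit of escape points
  obtain ⟨w, ψ, hψ, hw⟩ := CompactSpace.tendsto_subseq (fun k => (⇑f)^[j k] (z k))
  have hzψ : Tendsto (fun k => z (ψ k)) atTop (nhds x) := hzx.comp hψ.tendsto_atTop
  obtain ⟨k₀, hk₀⟩ := Metric.tendsto_atTop.mp hzψ α hαpos
  have hfar : ∀ o ∈ O, α ≤ dist w o := by
    intro o ho
    have hdt : Tendsto (fun k => dist ((⇑f)^[j (ψ k)] (z (ψ k))) o) atTop (nhds (dist w o)) :=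
      hw.dist tendsto_const_nhds
    apply ge_of_tendsto hdt
    filter_upwards [eventually_ge_atTop k₀] with k hk
    exact hj (ψ k) (hk₀ k hk) o ho
  -- the constant c
  obtain ⟨ρ, hρ, hρw⟩ := hper w
  have hρw' : Function.IsPeriodicPt (⇑f) ρ w := hρw
  set Dw : Finset ℝ := (Finset.range ρ).image (fun i => dist ((⇑f)^[i] w) x) with hDwdef
  have hDwne : Dw.Nonempty :=
    ⟨dist w x, Finset.mem_image.mpr ⟨0, Finset.mem_range.mpr hρ, by simp⟩⟩
  refine ⟨x, w, fun k => z (ψ k), fun k => j (ψ k), Dw.min' hDwne / 3, ?_, hzψ, hw, ?_⟩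
  · have hpos : 0 < Dw.min' hDwne := by
      apply (Finset.lt_min'_iff _ hDwne).mpr
      intro r hr
      obtain ⟨i, hi, rfl⟩ := Finset.mem_image.mp hr
      apply dist_pos.mpr
      intro heq
      have hiρ : i < ρ := Finset.mem_range.mp hi
      have hw2 : w = (⇑f)^[ρ - i] x := by
        have h7 : (⇑f)^[ρ - i] ((⇑f)^[i] w) = w := by
          rw [← Function.iterate_add_apply, Nat.sub_add_cancel hiρ.le]
          exact hρw
        rw [heq] at h7
        exact h7.symm
      have h8 := hfar _ (hO (ρ - i))
      rw [← hw2, dist_self] at h8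
      linarith
    linarith
  · intro i
    have h1 : (⇑f)^[i % ρ] w = (⇑f)^[i] w := hρw'.iterate_mod_apply i
    have h2 : dist ((⇑f)^[i % ρ] w) x ∈ Dw :=
      Finset.mem_image.mpr ⟨i % ρ, Finset.mem_range.mpr (Nat.mod_lt _ hρ), rfl⟩
    rw [h1] at h2
    have h3 := Finset.min'_le _ _ h2
    linarith

end Aux


set_option maxHeartbeats 1000000

private lemma exists_pow_half_lt {ε : ℝ} (hε : 0 < ε) : ∃ n : ℕ, (2:ℝ)⁻¹ ^ n < ε :=
  exists_pow_lt_of_lt_one hε (by norm_num)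

theorem stmt19 {X : Type*} [MetricSpace X] [CompactSpace X]
    (f : X ≃ₜ X) (hper : ∀ x : X, ∃ n > 0, (⇑f)^[n] x = x)
    (hne : ¬ (∀ ε > (0:ℝ), ∃ δ > (0:ℝ), ∀ x y : X, dist x y < δ →
      ∀ n : ℕ, dist ((⇑f)^[n] x) ((⇑f)^[n] y) < ε)) :
    ∃ A : NonemptyCompacts X, IsRec (hyper f) A ∧ ¬ IsAP (hyper f) A := by
  classical
  obtain ⟨x, w, z, v, c, hc, hzx, hvw, hwfar⟩ := exists_master f hper hne
  choose q hqpos hqfix using hper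
  -- one construction step
  have hstep : ∀ (mm : ℕ) (k T : ℕ), 0 < T → (⇑f)^[T] x = x →
      ∃ k' T' : ℕ, k < k' ∧ 0 < T' ∧ T ∣ T' ∧ (⇑f)^[T'] x = x ∧
        (⇑f)^[T'] (z k') = z k' ∧ dist (z k') x < (2:ℝ)⁻¹^(mm+1) ∧ dist (z k') x < c ∧
        ∀ jj ≤ mm * T, dist ((⇑f)^[jj] (z k')) ((⇑f)^[jj] x) < (2:ℝ)⁻¹^(mm+1) := by
    intro mm k T hT hTx
    obtain ⟨α, hα, hsh⟩ := shadow f x (mm * T) (show (0:ℝ) < (2:ℝ)⁻¹^(mm+1) by positivity)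
    obtain ⟨k₁, hk₁⟩ := Metric.tendsto_atTop.mp hzx (min α (min ((2:ℝ)⁻¹^(mm+1)) c))
      (lt_min hα (lt_min (by positivity) hc))
    refine ⟨max (k+1) k₁, Nat.lcm T (q (z (max (k+1) k₁))), ?_, ?_, ?_, ?_, ?_, ?_, ?_, ?_⟩
    · exact lt_of_lt_of_le (Nat.lt_succ_self k) (le_max_left _ _)
    · exact Nat.lcm_pos hT (hqpos _)
    · exact Nat.dvd_lcm_left _ _
    · exact fix_dvd _ hTx (Nat.dvd_lcm_left _ _)
    · exact fix_dvd _ (hqfix _) (Nat.dvd_lcm_right _ _)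
    · exact lt_of_lt_of_le (hk₁ _ (le_max_right _ _))
        (le_trans (min_le_right _ _) (min_le_left _ _))
    · exact lt_of_lt_of_le (hk₁ _ (le_max_right _ _))
        (le_trans (min_le_right _ _) (min_le_right _ _))
    · exact fun jj hjj => hsh (z _)
        (lt_of_lt_of_le (hk₁ _ (le_max_right _ _)) (min_le_left _ _)) jj hjj
  -- invariant
  let I : ℕ × ℕ → Prop := fun s => 0 < s.2 ∧ (⇑f)^[s.2] x = x ∧
    (⇑f)^[s.2] (z s.1) = z s.1 ∧ dist (z s.1) x < c
  have hstep' : ∀ (mm : ℕ) (s : ℕ × ℕ), I s → ∃ s' : ℕ × ℕ, I s' ∧ s.1 < s'.1 ∧ s.2 ∣ s'.2 ∧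
      dist (z s'.1) x < (2:ℝ)⁻¹^(mm+1) ∧
      ∀ jj ≤ mm * s.2, dist ((⇑f)^[jj] (z s'.1)) ((⇑f)^[jj] x) < (2:ℝ)⁻¹^(mm+1) := by
    rintro mm ⟨k, T⟩ ⟨h1, h2, _h3, _h4⟩
    obtain ⟨k', T', hkk, hT', hdvd, hTx', hTz', hd1, hd2, hsh⟩ := hstep mm k T h1 h2
    exact ⟨(k', T'), ⟨hT', hTx', hTz', hd2⟩, hkk, hdvd, hd1, hsh⟩
  -- initial state
  obtain ⟨k₀i, hk₀i⟩ := Metric.tendsto_atTop.mp hzx c hc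
  have hI0 : I (k₀i, Nat.lcm (q x) (q (z k₀i))) :=
    ⟨Nat.lcm_pos (hqpos x) (hqpos _), fix_dvd _ (hqfix x) (Nat.dvd_lcm_left _ _),
     fix_dvd _ (hqfix _) (Nat.dvd_lcm_right _ _), hk₀i k₀i le_rfl⟩
  -- the recursive sequence of states
  let Srec : ℕ → {s : ℕ × ℕ // I s} := fun m =>
    Nat.rec ⟨(k₀i, Nat.lcm (q x) (q (z k₀i))), hI0⟩
      (fun mm prev => ⟨(hstep' mm prev.1 prev.2).choose,
        (hstep' mm prev.1 prev.2).choose_spec.1⟩) m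
  let K : ℕ → ℕ := fun m => (Srec m).1.1
  let T : ℕ → ℕ := fun m => (Srec m).1.2
  have hIm : ∀ m, I (Srec m).1 := fun m => (Srec m).2
  have hspec : ∀ m, I (Srec (m+1)).1 ∧ K m < K (m+1) ∧ T m ∣ T (m+1) ∧
      dist (z (K (m+1))) x < (2:ℝ)⁻¹^(m+1) ∧
      ∀ jj ≤ m * T m, dist ((⇑f)^[jj] (z (K (m+1)))) ((⇑f)^[jj] x) < (2:ℝ)⁻¹^(m+1) :=
    fun m => (hstep' m (Srec m).1 (Srec m).2).choose_spec
  have hTpos : ∀ m, 0 < T m := fun m => (hIm m).1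
  have hTx : ∀ m, (⇑f)^[T m] x = x := fun m => (hIm m).2.1
  have hTz : ∀ m, (⇑f)^[T m] (z (K m)) = z (K m) := fun m => (hIm m).2.2.1
  have hdc : ∀ m, dist (z (K m)) x < c := fun m => (hIm m).2.2.2
  have hKlt : ∀ m, K m < K (m+1) := fun m => (hspec m).2.1
  have hTdvd : ∀ m, T m ∣ T (m+1) := fun m => (hspec m).2.2.1
  have hdistK : ∀ m, dist (z (K (m+1))) x < (2:ℝ)⁻¹^(m+1) := fun m => (hspec m).2.2.2.1
  have hshK : ∀ m, ∀ jj ≤ m * T m,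
      dist ((⇑f)^[jj] (z (K (m+1)))) ((⇑f)^[jj] x) < (2:ℝ)⁻¹^(m+1) :=
    fun m => (hspec m).2.2.2.2
  have hTdvd' : ∀ a b, a ≤ b → T a ∣ T b := by
    intro a b hab
    induction b, hab using Nat.le_induction with
    | base => exact dvd_rfl
    | succ b _hb ih => exact ih.trans (hTdvd b)
  have hTmono : ∀ a b, a ≤ b → T a ≤ T b :=
    fun a b hab => Nat.le_of_dvd (hTpos b) (hTdvd' a b hab)
  have hKmono : StrictMono K := strictMono_nat_of_lt_succ hKlt
  have hzK : Tendsto (fun m => z (K m)) atTop (nhds x) := hzx.comp hKmono.tendsto_atTop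
  -- the set A
  have hAcomp : IsCompact (insert x (Set.range (fun m => z (K m)))) :=
    hzK.isCompact_insert_range
  let A : NonemptyCompacts X :=
    ⟨⟨insert x (Set.range (fun m => z (K m))), hAcomp⟩, ⟨x, Set.mem_insert _ _⟩⟩
  have hAcoe : (A : Set X) = insert x (Set.range (fun m => z (K m))) := rfl
  have hxA : x ∈ (A : Set X) := Set.mem_insert _ _
  have hzA : ∀ m, z (K m) ∈ (A : Set X) := fun m => Set.mem_insert_of_mem _ ⟨m, rfl⟩
  have hAmem : ∀ u, u ∈ (A : Set X) → u = x ∨ ∃ m, u = z (K m) := by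
    intro u hu
    rw [hAcoe, Set.mem_insert_iff] at hu
    rcases hu with h | h
    · exact Or.inl h
    · obtain ⟨m, hm⟩ := h
      exact Or.inr ⟨m, hm.symm⟩
  have hfixA : ∀ (m m' : ℕ), m' ≤ m → (⇑f)^[m * T m] (z (K m')) = z (K m') :=
    fun m m' h => fix_dvd _ (hTz m') ((hTdvd' m' m h).trans (dvd_mul_left _ _))
  have hfixx : ∀ m, (⇑f)^[m * T m] x = x := fun m => fix_dvd _ (hTx m) (dvd_mul_left _ _)
  refine ⟨A, ?_, ?_⟩
  · -- Recurrence
    intro ε hε m₀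
    obtain ⟨mε, hmε⟩ := exists_pow_half_lt hε
    set m := max (max mε m₀) 1 with hmdef
    have hm1 : 1 ≤ m := le_max_right _ _
    have hmm₀ : m₀ ≤ m := le_trans (le_max_right _ _) (le_max_left _ _)
    have hmmε : mε ≤ m := le_trans (le_max_left _ _) (le_max_left _ _)
    refine ⟨m * T m, le_trans hmm₀ (Nat.le_mul_of_pos_right m (hTpos m)),
      Nat.mul_pos (lt_of_lt_of_le one_pos hm1) (hTpos m), ?_⟩
    rw [NonemptyCompacts.dist_eq, hyper_iter]
    have hbound : hausdorffDist ((⇑f)^[m * T m] '' (A : Set X)) (A : Set X)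
        ≤ (2:ℝ)⁻¹^(m+1) := by
      apply hausdorffDist_le_of_mem_dist (by positivity)
      · rintro u ⟨a, ha, rfl⟩
        rcases hAmem a ha with h | ⟨m', h⟩
        · exact ⟨x, hxA, by rw [h, hfixx m, dist_self]; positivity⟩
        · by_cases hmm : m' ≤ m
          · exact ⟨z (K m'), hzA m', by rw [h, hfixA m m' hmm, dist_self]; positivity⟩
          · push_neg at hmm
            refine ⟨x, hxA, ?_⟩
            rw [h]
            have h1 : m' - 1 + 1 = m' := by omega
            have h2 : m * T m ≤ (m'-1) * T (m'-1) :=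
              Nat.mul_le_mul (by omega) (hTmono m (m'-1) (by omega))
            have h3 := hshK (m'-1)
            rw [h1] at h3
            have h4 := h3 (m * T m) h2
            rw [hfixx m] at h4
            have h5 : (2:ℝ)⁻¹^(m'-1+1) ≤ (2:ℝ)⁻¹^(m+1) :=
              pow_le_pow_of_le_one (by norm_num) (by norm_num) (by omega)
            rw [h1] at h5
            exact le_trans (le_of_lt h4) h5
      · intro b hb
        rcases hAmem b hb with h | ⟨m', h⟩
        · exact ⟨(⇑f)^[m * T m] x, Set.mem_image_of_mem _ hxA,
            by rw [h, hfixx m, dist_self]; positivity⟩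
        · by_cases hmm : m' ≤ m
          · exact ⟨(⇑f)^[m * T m] (z (K m')), Set.mem_image_of_mem _ (hzA m'),
              by rw [h, hfixA m m' hmm, dist_self]; positivity⟩
          · push_neg at hmm
            refine ⟨(⇑f)^[m * T m] x, Set.mem_image_of_mem _ hxA, ?_⟩
            rw [h, hfixx m]
            have h1 : m' - 1 + 1 = m' := by omega
            have h4 := hdistK (m'-1)
            rw [h1] at h4
            have h5 : (2:ℝ)⁻¹^(m'-1+1) ≤ (2:ℝ)⁻¹^(m+1) :=
              pow_le_pow_of_le_one (by norm_num) (by norm_num) (by omega)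
            rw [h1] at h5
            exact le_trans (le_of_lt h4) h5
    have h6 : (2:ℝ)⁻¹^(m+1) ≤ (2:ℝ)⁻¹^mε :=
      pow_le_pow_of_le_one (by norm_num) (by norm_num) (by omega)
    linarith
  · -- Not almost periodic
    intro hap
    obtain ⟨N, hN⟩ := hap c hc
    have hWK : Tendsto (fun m => (⇑f)^[v (K m)] (z (K m))) atTop (nhds w) :=
      hvw.comp hKmono.tendsto_atTop
    have hev : ∀ᶠ m in atTop, ∀ i ∈ Set.Iio N,
        2*c < dist ((⇑f)^[i] ((⇑f)^[v (K m)] (z (K m)))) x := by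
      rw [eventually_all_finite (Set.finite_Iio N)]
      intro i _hi
      have hcont : Tendsto (fun m => dist ((⇑f)^[i] ((⇑f)^[v (K m)] (z (K m)))) x) atTop
          (nhds (dist ((⇑f)^[i] w) x)) :=
        (((f.continuous.iterate i).continuousAt).tendsto.comp hWK).dist tendsto_const_nhds
      exact hcont.eventually_const_lt (by linarith [hwfar i])
    obtain ⟨m, hm⟩ := hev.exists
    obtain ⟨i, hiN, hdA⟩ := hN (v (K m))
    rw [NonemptyCompacts.dist_eq, hyper_iter] at hdA
    have hpt : (⇑f)^[v (K m) + i] (z (K m)) ∈ (⇑f)^[v (K m) + i] '' (A : Set X) :=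
      Set.mem_image_of_mem _ (hzA m)
    have hfin : EMetric.hausdorffEdist ((⇑f)^[v (K m) + i] '' (A : Set X)) (A : Set X) ≠ ⊤ :=
      hausdorffEdist_ne_top_of_nonempty_of_bounded ⟨_, hpt⟩ ⟨x, hxA⟩
        ((hAcomp.image (f.continuous.iterate _)).isBounded) hAcomp.isBounded
    obtain ⟨b, hbA, hdb⟩ := exists_dist_lt_of_hausdorffDist_lt hpt hdA hfin
    have hbx : dist b x < c := by
      rcases hAmem b hbA with h | ⟨m', h⟩
      · rw [h, dist_self]; exact hc
      · rw [h]; exact hdc m'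
    have h2c := hm i hiN
    have heq : (⇑f)^[v (K m) + i] (z (K m)) = (⇑f)^[i] ((⇑f)^[v (K m)] (z (K m))) := by
      rw [add_comm, Function.iterate_add_apply]
    rw [heq] at hdb
    have htri := dist_triangle ((⇑f)^[i] ((⇑f)^[v (K m)] (z (K m)))) b x
    linarith
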